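/- Let (X, μ) be a probability space, let g : X → X be a measure-preserving map, let n ≥ 0 be an integer, and let φ : X → ℝ be a measurable function with φ(x) > 0 for every x. If the function x ↦ max(0, Log(φ(g^[n](x)) / φ(x))) is integrable with respect to μ, then the function x ↦ Log(φ(g^[n](x)) / φ(x)) is integrable with respect to μ and its integral equals 0. -/

import Mathlib

open MeasureTheory Filter Topology

private lemma trunc_lip (K a b : ℝ) :
    |max (-K) (min a K) - max (-K) (min b K)| ≤ |a - b| := by
  calc |max (-K) (min a K) - max (-K) (min b K)|
      = |max (min a K) (-K) - max (min b K) (-K)| := by rw [max_comm (-K), max_comm (-K)]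
    _ ≤ |min a K - min b K| := abs_max_sub_max_le_abs _ _ _
    _ ≤ max |a - b| |K - K| := abs_min_sub_min_le_max a K b K
    _ = |a - b| := by simp

private lemma trunc_mono (K : ℝ) : Monotone (fun a : ℝ => max (-K) (min a K)) :=
  fun _ _ hab => max_le_max le_rfl (min_le_min hab le_rfl)

private lemma pos_sub_neg (a : ℝ) : max 0 a - max 0 (-a) = a := by
  rcases le_total 0 a with h | h
  · rw [max_eq_right h, max_eq_left (neg_nonpos.mpr h)]; ring
  · rw [max_eq_left h, max_eq_right (neg_nonneg.mpr h)]; ring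

/-- Ledrappier–Strelcyn lemma: if the positive part of `log (φ ∘ g^[n] / φ)` is
integrable, then the whole function is integrable with integral zero. -/
theorem ledrappier_strelcyn {X : Type*} [MeasurableSpace X]
    (μ : Measure X) [IsProbabilityMeasure μ]
    (g : X → X) (hg : MeasurePreserving g μ μ) (n : ℕ)
    (φ : X → ℝ) (hφm : Measurable φ) (hφpos : ∀ x, 0 < φ x)
    (hint : Integrable (fun x => max 0 (Real.log (φ (g^[n] x) / φ x))) μ) :
    Integrable (fun x => Real.log (φ (g^[n] x) / φ x)) μ ∧
      ∫ x, Real.log (φ (g^[n] x) / φ x) ∂μ = 0 := by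
  set h : X → X := g^[n] with hh_def
  have hh : MeasurePreserving h μ μ := hg.iterate n
  set f : X → ℝ := fun x => Real.log (φ x) with hf_def
  have hfm : Measurable f := hφm.log
  have hFeq : ∀ x, Real.log (φ (h x) / φ x) = f (h x) - f x := fun x =>
    Real.log_div (hφpos _).ne' (hφpos x).ne'
  set F : X → ℝ := fun x => f (h x) - f x with hF_def
  have hgoal : (fun x => Real.log (φ (g^[n] x) / φ x)) = F := funext hFeq
  rw [hgoal]
  have hFm : Measurable F := (hfm.comp hh.measurable).sub hfm
  -- the positive part of F is integrable
  have hFpos_int : Integrable (fun x => max 0 (F x)) μ := by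
    have : (fun x => max 0 (Real.log (φ (g^[n] x) / φ x))) = fun x => max 0 (F x) := by
      funext x; rw [hFeq x]
    rwa [this] at hint
  -- truncations
  set τ : ℕ → ℝ → ℝ := fun K a => max (-(K : ℝ)) (min a K) with hτ_def
  set u : ℕ → X → ℝ := fun K x => τ K (f x) with hu_def
  set v : ℕ → X → ℝ := fun K x => u K (h x) - u K x with hv_def
  have hum : ∀ K, Measurable (u K) := fun K =>
    measurable_const.max (hfm.min measurable_const)
  have hvm : ∀ K, Measurable (v K) := fun K => ((hum K).comp hh.measurable).sub (hum K)
  have hu_bdd : ∀ K x, |u K x| ≤ (K : ℝ) := by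
    intro K x
    rw [abs_le]
    exact ⟨le_max_left _ _,
      max_le (neg_le_self (Nat.cast_nonneg K)) (min_le_right _ _)⟩
  have hu_int : ∀ K, Integrable (u K) μ := by
    intro K
    refine (integrable_const ((K : ℝ))).mono' (hum K).aestronglyMeasurable ?_
    exact Eventually.of_forall fun x => by
      rw [Real.norm_eq_abs]; exact hu_bdd K x
  have huh_int : ∀ K, Integrable (fun x => u K (h x)) μ := by
    intro K
    refine (integrable_const ((K : ℝ))).mono'
      ((hum K).comp hh.measurable).aestronglyMeasurable ?_
    exact Filter.Eventually.of_forall fun x => by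
      rw [Real.norm_eq_abs]; exact hu_bdd K (h x)
  have hv_int : ∀ K, Integrable (v K) μ := fun K => (huh_int K).sub (hu_int K)
  -- ∫ v K = 0
  have hv_integral : ∀ K, ∫ x, v K x ∂μ = 0 := by
    intro K
    have hcomp : ∫ x, u K (h x) ∂μ = ∫ x, u K x ∂μ := by
      have := integral_map (μ := μ) (f := u K) hh.measurable.aemeasurable
        ((hum K).aestronglyMeasurable)
      rw [hh.map_eq] at this
      exact this.symm
    simp only [hv_def]
    rw [integral_sub (huh_int K) (hu_int K), hcomp, sub_self]
  -- |v K x| ≤ |F x|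
  have hv_abs_le : ∀ K x, |v K x| ≤ |F x| := fun K x => trunc_lip _ _ _
  -- pointwise convergence (eventually constant)
  have hv_tendsto : ∀ x, Tendsto (fun K => v K x) atTop (nhds (F x)) := by
    intro x
    have hev : ∀ᶠ K : ℕ in atTop, v K x = F x := by
      filter_upwards [eventually_ge_atTop ⌈max |f (h x)| |f x|⌉₊] with K hK
      have h1 : |f (h x)| ≤ (K : ℝ) :=
        le_trans (le_max_left _ _) ((Nat.le_ceil _).trans (by exact_mod_cast hK))
      have h2 : |f x| ≤ (K : ℝ) :=
        le_trans (le_max_right _ _) ((Nat.le_ceil _).trans (by exact_mod_cast hK))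
      have e1 : u K (h x) = f (h x) := by
        simp only [hu_def, hτ_def]
        rw [min_eq_left (le_trans (le_abs_self _) h1),
          max_eq_right (le_trans (neg_le_neg h1) (neg_abs_le _))]
      have e2 : u K x = f x := by
        simp only [hu_def, hτ_def]
        rw [min_eq_left (le_trans (le_abs_self _) h2),
          max_eq_right (le_trans (neg_le_neg h2) (neg_abs_le _))]
      simp only [hv_def, e1, e2]; rfl
    exact Tendsto.congr' (hev.mono fun K hK => hK.symm) tendsto_const_nhds
  -- positive part of v K is ≤ positive part of F
  have hvpos_le : ∀ K x, max 0 (v K x) ≤ max 0 (F x) := by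
    intro K x
    refine max_le (le_max_left _ _) ?_
    rcases le_or_gt (v K x) 0 with hle | hlt
    · exact hle.trans (le_max_left _ _)
    · have hFpos : 0 < F x := by
        by_contra hc
        push_neg at hc
        have : f (h x) ≤ f x := by simpa [hF_def, sub_nonpos] using hc
        have hmono : u K (h x) ≤ u K x := trunc_mono (K : ℝ) this
        have : v K x ≤ 0 := sub_nonpos.mpr hmono
        linarith
      calc v K x ≤ |v K x| := le_abs_self _
        _ ≤ |F x| := hv_abs_le K x
        _ = F x := abs_of_pos hFpos
        _ ≤ max 0 (F x) := le_max_right _ _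
  -- integral of neg part of v K equals integral of pos part, bounded by ∫ F⁺
  have hvpos_int : ∀ K, Integrable (fun x => max 0 (v K x)) μ := by
    intro K
    refine (hv_int K).abs.mono' (measurable_const.max (hvm K)).aestronglyMeasurable ?_
    refine Filter.Eventually.of_forall fun x => ?_
    rw [Real.norm_eq_abs, abs_of_nonneg (le_max_left _ _)]
    exact max_le (abs_nonneg _) (le_abs_self _)
  have hvneg_int : ∀ K, Integrable (fun x => max 0 (-(v K x))) μ := by
    intro K
    refine (hv_int K).abs.mono' (measurable_const.max (hvm K).neg).aestronglyMeasurable ?_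
    refine Filter.Eventually.of_forall fun x => ?_
    rw [Real.norm_eq_abs, abs_of_nonneg (le_max_left _ _)]
    exact max_le (abs_nonneg _) (neg_le_abs _)
  have hvneg_integral_le : ∀ K, ∫ x, max 0 (-(v K x)) ∂μ ≤ ∫ x, max 0 (F x) ∂μ := by
    intro K
    have hsplit : ∫ x, max 0 (v K x) ∂μ - ∫ x, max 0 (-(v K x)) ∂μ = 0 := by
      rw [← integral_sub (hvpos_int K) (hvneg_int K)]
      simp only [pos_sub_neg]
      exact hv_integral K
    have heq : ∫ x, max 0 (-(v K x)) ∂μ = ∫ x, max 0 (v K x) ∂μ := by linarith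
    rw [heq]
    exact integral_mono (hvpos_int K) hFpos_int fun x => hvpos_le K x
  -- Fatou to get integrability of the negative part of F
  have hFneg_int : Integrable (fun x => max 0 (-(F x))) μ := by
    have hmeas : Measurable fun x => max 0 (-(F x)) := measurable_const.max hFm.neg
    refine ⟨hmeas.aestronglyMeasurable, ?_⟩
    have hnn : 0 ≤ᵐ[μ] fun x => max 0 (-(F x)) :=
      Filter.Eventually.of_forall fun x => le_max_left _ _
    rw [hasFiniteIntegral_iff_ofReal hnn]
    have hC : ∀ K : ℕ, ∫⁻ x, ENNReal.ofReal (max 0 (-(v K x))) ∂μ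
        ≤ ENNReal.ofReal (∫ x, max 0 (F x) ∂μ) := by
      intro K
      rw [← ofReal_integral_eq_lintegral_ofReal (hvneg_int K)
        (Eventually.of_forall fun x => le_max_left _ _)]
      exact ENNReal.ofReal_le_ofReal (hvneg_integral_le K)
    calc ∫⁻ x, ENNReal.ofReal (max 0 (-(F x))) ∂μ
        ≤ ∫⁻ x, liminf (fun K : ℕ => ENNReal.ofReal (max 0 (-(v K x)))) atTop ∂μ := by
          refine lintegral_mono fun x => ?_
          have : Tendsto (fun K : ℕ => ENNReal.ofReal (max 0 (-(v K x)))) atTop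
              (nhds (ENNReal.ofReal (max 0 (-(F x))))) :=
            (ENNReal.continuous_ofReal.tendsto _).comp
              (((continuous_const.max continuous_neg).tendsto _).comp (hv_tendsto x))
          exact le_of_eq this.liminf_eq.symm
      _ ≤ liminf (fun K : ℕ => ∫⁻ x, ENNReal.ofReal (max 0 (-(v K x))) ∂μ) atTop :=
          lintegral_liminf_le fun K =>
            (measurable_const.max (hvm K).neg).ennreal_ofReal
      _ ≤ ENNReal.ofReal (∫ x, max 0 (F x) ∂μ) := by
          refine liminf_le_of_frequently_le (Frequently.of_forall hC) ?_
          exact isBoundedUnder_of ⟨0, fun K => zero_le⟩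
      _ < ⊤ := ENNReal.ofReal_lt_top
  -- F is integrable
  have hF_int : Integrable F μ := by
    have : F = fun x => max 0 (F x) - max 0 (-(F x)) := by
      funext x; rw [pos_sub_neg]
    rw [this]
    exact hFpos_int.sub hFneg_int
  refine ⟨hF_int, ?_⟩
  -- dominated convergence to compute the integral
  have hDCT : Tendsto (fun K => ∫ x, v K x ∂μ) atTop (nhds (∫ x, F x ∂μ)) := by
    refine tendsto_integral_of_dominated_convergence (fun x => |F x|)
      (fun K => (hvm K).aestronglyMeasurable) hF_int.abs
      (fun K => Eventually.of_forall fun x => ?_)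
      (Eventually.of_forall fun x => hv_tendsto x)
    rw [Real.norm_eq_abs]
    exact hv_abs_le K x
  have : Tendsto (fun _ : ℕ => (0 : ℝ)) atTop (nhds (∫ x, F x ∂μ)) := by
    refine hDCT.congr fun K => ?_
    rw [hv_integral K]
  exact tendsto_nhds_unique this tendsto_const_nhds
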